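/- The number of digitally convex sets of the cycle C_n satisfies n_D(C_3) = 2, n_D(C_4) = 6, n_D(C_5) = 12, n_D(C_6) = 20, and for every integer n ≥ 7, n_D(C_n) = 2·n_D(C_{n−1}) − n_D(C_{n−2}) + n_D(C_{n−4}). -/

import Mathlib

open SimpleGraph

/-- `N[S]`: the union of closed neighbourhoods of the vertices of `S`. -/
def closedNbhd {V : Type*} (G : SimpleGraph V) (S : Set V) : Set V :=
  ⋃ v ∈ S, insert v (G.neighborSet v)

/-- A set `S` is digitally convex in `G` if every vertex `v` with `N[v] ⊆ N[S]`
belongs to `S`. -/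
def DigConvex {V : Type*} (G : SimpleGraph V) (S : Set V) : Prop :=
  ∀ v : V, insert v (G.neighborSet v) ⊆ closedNbhd G S → v ∈ S

/-- `n_D(G)`: the number of digitally convex sets of `G`. -/
noncomputable def nD {V : Type*} (G : SimpleGraph V) : ℕ :=
  Nat.card {S : Set V // DigConvex G S}

/-- The cycle graph `C_n` on `ZMod n`: `i` adjacent to `j` iff `j - i = ±1`. -/
def cycleG (n : ℕ) : SimpleGraph (ZMod n) :=
  SimpleGraph.fromRel (fun i j => j = i + 1)


namespace NDcycle

abbrev St := Bool × Bool × Bool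

def ok (a b c d : Bool) : Bool := !(a && !b && c) && !(a && !b && !c && d)

def compat (p q : St) : Prop :=
  q.1 = p.2.1 ∧ q.2.1 = p.2.2 ∧ ok p.1 p.2.1 p.2.2 q.2.2 = true

instance : ∀ p q : St, Decidable (compat p q) := fun p q => by
  unfold compat; infer_instance

def P : ℕ → St → St → ℕ
  | 0, a, b => if a = b then 1 else 0
  | k+1, a, b => ∑ c : St, if compat a c then P k c b else 0

lemma P_zero (a b : St) : P 0 a b = if a = b then 1 else 0 := rfl

lemma P_succ (k : ℕ) (a b : St) :
    P (k+1) a b = ∑ c : St, if compat a c then P k c b else 0 := rfl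

lemma P_add (m k : ℕ) (a b : St) : P (m + k) a b = ∑ c : St, P m a c * P k c b := by
  induction m generalizing a with
  | zero =>
    simp only [Nat.zero_add, P_zero]
    rw [Finset.sum_congr rfl (fun c _ => by rw [ite_mul, one_mul, zero_mul])]
    simp
  | succ m ih =>
    rw [show m + 1 + k = (m + k) + 1 by omega, P_succ]
    conv_rhs => rw [Finset.sum_congr rfl (fun c _ => by rw [P_succ, Finset.sum_mul])]
    rw [Finset.sum_comm]
    refine Finset.sum_congr rfl fun d _ => ?_
    rw [show (if compat a d then P (m+k) d b else 0) =
      if compat a d then ∑ c : St, P m d c * P k c b else 0 by split <;> simp [ih]]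
    split
    · rfl
    · simp

end NDcycle

namespace NDcycle

set_option maxRecDepth 10000 in
lemma key_small : ∀ c b : St,
    (∑ d : St, P 3 c d * P 3 d b) + P 4 c b
      = 2 * (∑ d : St, P 3 c d * P 2 d b) + P 2 c b := by decide

lemma key6 (c b : St) : P 6 c b + P 4 c b = 2 * P 5 c b + P 2 c b := by
  have h1 := P_add 3 3 c b
  have h2 := P_add 3 2 c b
  rw [show (6:ℕ) = 3+3 from rfl, h1, show (5:ℕ) = 3+2 from rfl, h2]
  exact key_small c b

lemma P_rec (k : ℕ) (a b : St) :
    P (k+6) a b + P (k+4) a b = 2 * P (k+5) a b + P (k+2) a b := by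
  rw [P_add k 6, P_add k 4, P_add k 5, P_add k 2, Finset.mul_sum,
    ← Finset.sum_add_distrib, ← Finset.sum_add_distrib]
  refine Finset.sum_congr rfl fun c _ => ?_
  have h := key6 c b
  nlinarith [h]

/-- the trace of the n-th power of the transfer matrix -/
def T (n : ℕ) : ℕ := ∑ a : St, P n a a

lemma T_rec (k : ℕ) : T (k+6) + T (k+4) = 2 * T (k+5) + T (k+2) := by
  unfold T
  rw [Finset.mul_sum, ← Finset.sum_add_distrib, ← Finset.sum_add_distrib]
  exact Finset.sum_congr rfl fun a _ => P_rec k a a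

end NDcycle

namespace NDcycle

/-- property of being a `compat`-path from `a` to `b` -/
def PTp (k : ℕ) (a b : St) (p : Fin (k+1) → St) : Prop :=
  p 0 = a ∧ p (Fin.last k) = b ∧ ∀ i : Fin k, compat (p i.castSucc) (p i.succ)

lemma card_PT : ∀ (k : ℕ) (a b : St),
    Nat.card {p : Fin (k+1) → St // PTp k a b p} = P k a b := by
  intro k
  induction k with
  | zero =>
    intro a b
    by_cases hab : a = b
    · subst hab
      haveI : Unique {p : Fin 1 → St // PTp 0 a a p} :=
        { default := ⟨fun _ => a, rfl, rfl, fun i => i.elim0⟩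
          uniq := fun q => Subtype.ext (funext fun i => by
            have : i = 0 := Subsingleton.elim _ _
            rw [this]; exact q.2.1) }
      rw [Nat.card_unique, P_zero, if_pos rfl]
    · haveI : IsEmpty {p : Fin 1 → St // PTp 0 a b p} := ⟨fun q => hab (by
        have h0 : q.1 (Fin.last 0) = q.1 0 := congrArg q.1 (Subsingleton.elim _ _)
        exact q.2.1.symm.trans (h0.symm.trans q.2.2.1))⟩
      rw [Nat.card_of_isEmpty, P_zero, if_neg hab]
  | succ k ih =>
    intro a b
    classical
    rw [Nat.card_eq_fintype_card,
      Fintype.card_congr (Equiv.sigmaFiberEquiv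
        (fun p : {p : Fin (k+2) → St // PTp (k+1) a b p} => p.1 1)).symm,
      Fintype.card_sigma, P_succ]
    refine Finset.sum_congr rfl fun c _ => ?_
    by_cases hc : compat a c
    · rw [if_pos hc, ← ih c b, ← Nat.card_eq_fintype_card]
      refine Nat.card_congr
        ⟨fun r => ⟨fun i => r.1.1 i.succ, ?_⟩, fun q => ⟨⟨Fin.cons a q.1, ?_⟩, ?_⟩,
          fun r => ?_, fun q => ?_⟩
      · refine ⟨?_, ?_, fun i => ?_⟩
        · show r.1.1 (Fin.succ 0) = c
          rw [Fin.succ_zero_eq_one]; exact r.2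
        · show r.1.1 (Fin.last k).succ = b
          rw [Fin.succ_last]; exact r.1.2.2.1
        · show compat (r.1.1 i.castSucc.succ) (r.1.1 i.succ.succ)
          have h := r.1.2.2.2 i.succ
          rwa [← Fin.succ_castSucc] at h
      · refine ⟨Fin.cons_zero _ _, ?_, fun i => ?_⟩
        · rw [← Fin.succ_last, Fin.cons_succ]; exact q.2.2.1
        · refine Fin.cases ?_ (fun j => ?_) i
          · rw [Fin.castSucc_zero, Fin.cons_zero, Fin.cons_succ, q.2.1]
            exact hc
          · rw [← Fin.succ_castSucc, Fin.cons_succ, Fin.cons_succ]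
            exact q.2.2.2 j
      · rw [← Fin.succ_zero_eq_one]
        exact q.2.1
      · apply Subtype.ext; apply Subtype.ext; funext i
        refine Fin.cases ?_ (fun j => ?_) i
        · simp only [Fin.cons_zero]
          exact r.1.2.1.symm
        · simp only [Fin.cons_succ]
      · apply Subtype.ext; funext i
        simp only [Fin.cons_succ]
    · rw [if_neg hc]
      haveI : IsEmpty {p : {p : Fin (k+2) → St // PTp (k+1) a b p} // p.1 1 = c} := ⟨fun r => by
        have h := r.1.2.2.2 0
        rw [Fin.castSucc_zero, r.1.2.1, Fin.succ_zero_eq_one, r.2] at h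
        exact hc h⟩
      exact Fintype.card_eq_zero

end NDcycle

namespace NDcycle

def Cyc (n : ℕ) (w : ZMod n → St) : Prop := ∀ i, compat (w i) (w (i + 1))

set_option maxHeartbeats 2000000 in
lemma card_cyc_fiber (m : ℕ) (a : St) :
    Nat.card {w : ZMod (m+1) → St // Cyc (m+1) w ∧ w 0 = a}
      = Nat.card {p : Fin (m+2) → St // PTp (m+1) a a p} := by
  have hcast : ∀ z : ZMod (m+1), ((z.val : ℕ) : ZMod (m+1)) = z :=
    ZMod.natCast_rightInverse
  have hval : ∀ z : ZMod (m+1), (z + 1).val = (z.val + 1) % (m+1) := by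
    intro z
    conv_lhs => rw [← hcast z]
    rw [show ((z.val : ℕ) : ZMod (m+1)) + 1 = ((z.val + 1 : ℕ) : ZMod (m+1)) by push_cast; ring]
    exact ZMod.val_natCast _ _
  refine Nat.card_congr
    ⟨fun w => ⟨fun i => w.1 ((i.val : ℕ) : ZMod (m+1)), ?_, ?_, ?_⟩,
     fun p => ⟨fun z => p.1 ⟨z.val, by have := ZMod.val_lt z; omega⟩, ?_, ?_⟩,
     fun w => ?_, fun p => ?_⟩
  · show w.1 (((0 : Fin (m+2)).val : ℕ) : ZMod (m+1)) = a
    rw [show (((0 : Fin (m+2)).val : ℕ) : ZMod (m+1)) = 0 by norm_num]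
    exact w.2.2
  · show w.1 (((Fin.last (m+1)).val : ℕ) : ZMod (m+1)) = a
    rw [show (((Fin.last (m+1)).val : ℕ) : ZMod (m+1)) = 0 by
      simp [Fin.last, ZMod.natCast_self]]
    exact w.2.2
  · intro i
    show compat (w.1 ((i.castSucc.val : ℕ) : ZMod (m+1)))
      (w.1 ((i.succ.val : ℕ) : ZMod (m+1)))
    rw [Fin.coe_castSucc, Fin.val_succ,
      show ((i.val + 1 : ℕ) : ZMod (m+1)) = ((i.val : ℕ) : ZMod (m+1)) + 1 by push_cast; ring]
    exact w.2.1 _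
  · -- Cyc for the inverse map
    intro z
    have hvlt := ZMod.val_lt z
    by_cases h : z.val + 1 < m + 1
    · have h1 : (z + 1).val = z.val + 1 := by rw [hval, Nat.mod_eq_of_lt h]
      have hchain := p.2.2.2 ⟨z.val, by omega⟩
      show compat (p.1 ⟨z.val, _⟩) (p.1 ⟨(z+1).val, _⟩)
      have e1 : (⟨z.val, by have := ZMod.val_lt z; omega⟩ : Fin (m+2))
          = (⟨z.val, by omega⟩ : Fin (m+1)).castSucc := by ext; simp
      have e2 : (⟨(z+1).val, by have := ZMod.val_lt (z+1); omega⟩ : Fin (m+2))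
          = (⟨z.val, by omega⟩ : Fin (m+1)).succ := by ext; simp [h1]
      rw [e1, e2]
      exact hchain
    · have hz : z.val = m := by omega
      have h1 : (z + 1).val = 0 := by rw [hval, hz, Nat.mod_self]
      have hchain := p.2.2.2 ⟨m, by omega⟩
      show compat (p.1 ⟨z.val, _⟩) (p.1 ⟨(z+1).val, _⟩)
      have e1 : (⟨z.val, by omega⟩ : Fin (m+2)) = (⟨m, by omega⟩ : Fin (m+1)).castSucc := by
        ext; simp [hz]
      have iz : (⟨(z+1).val, by have := ZMod.val_lt (z+1); omega⟩ : Fin (m+2)) = 0 := by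
        ext; simp [h1]
      have isucc : ((⟨m, by omega⟩ : Fin (m+1)).succ) = Fin.last (m+1) := by ext; simp
      have e2 : p.1 ⟨(z+1).val, by have := ZMod.val_lt (z+1); omega⟩
          = p.1 ((⟨m, by omega⟩ : Fin (m+1)).succ) := by
        rw [iz, isucc, p.2.1, p.2.2.1]
      rw [e1, e2]
      exact hchain
  · show p.1 ⟨(0 : ZMod (m+1)).val, _⟩ = a
    rw [show (⟨(0 : ZMod (m+1)).val, by have := ZMod.val_lt (0 : ZMod (m+1)); omega⟩ : Fin (m+2))
        = 0 by ext; simp [ZMod.val_zero]]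
    exact p.2.1
  · apply Subtype.ext; funext z
    show w.1 ((((⟨z.val, _⟩ : Fin (m+2)).val : ℕ)) : ZMod (m+1)) = w.1 z
    rw [show (((⟨z.val, by have := ZMod.val_lt z; omega⟩ : Fin (m+2)).val : ℕ) : ZMod (m+1)) = z by
      simp [hcast z]]
  · apply Subtype.ext; funext i
    show p.1 ⟨(((i.val : ℕ) : ZMod (m+1))).val, _⟩ = p.1 i
    have hv : (((i.val : ℕ) : ZMod (m+1))).val = i.val % (m+1) := ZMod.val_natCast _ _
    by_cases h : i.val < m + 1
    · exact congrArg p.1 (by ext; simp [hv, Nat.mod_eq_of_lt h])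
    · have hi : i.val = m + 1 := by have := i.isLt; omega
      have e0 : (⟨(((i.val : ℕ) : ZMod (m+1))).val, by
          have := ZMod.val_lt (((i.val : ℕ) : ZMod (m+1))); omega⟩ : Fin (m+2)) = 0 := by
        ext; simp [hv, hi]
      have eL : i = Fin.last (m+1) := by ext; simp [hi, Fin.last]
      rw [e0, eL, p.2.1, p.2.2.1]

end NDcycle

namespace NDcycle

lemma card_cyc (n : ℕ) (hn : 1 ≤ n) :
    Nat.card {w : ZMod n → St // Cyc n w} = T n := by
  classical
  obtain ⟨m, rfl⟩ : ∃ m, n = m + 1 := ⟨n - 1, by omega⟩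
  haveI : NeZero (m+1) := ⟨by omega⟩
  rw [Nat.card_eq_fintype_card,
    Fintype.card_congr (Equiv.sigmaFiberEquiv
      (fun w : {w : ZMod (m+1) → St // Cyc (m+1) w} => w.1 0)).symm,
    Fintype.card_sigma]
  unfold T
  refine Finset.sum_congr rfl fun a _ => ?_
  rw [← Nat.card_eq_fintype_card,
    Nat.card_congr (Equiv.subtypeSubtypeEquivSubtypeInter (Cyc (m+1)) (fun w => w 0 = a)),
    card_cyc_fiber m a, card_PT]

end NDcycle

namespace NDcycle

lemma one_ne_zero' {n : ℕ} (hn : 3 ≤ n) : (1 : ZMod n) ≠ 0 := by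
  haveI : Fact (1 < n) := ⟨by omega⟩
  exact one_ne_zero

lemma adj_iff {n : ℕ} (i j : ZMod n) :
    (cycleG n).Adj i j ↔ i ≠ j ∧ (j = i + 1 ∨ i = j + 1) :=
  SimpleGraph.fromRel_adj _ _ _

lemma mem_closedNbhd {n : ℕ} (hn : 3 ≤ n) (S : Set (ZMod n)) (u : ZMod n) :
    u ∈ closedNbhd (cycleG n) S ↔ (u - 1 ∈ S ∨ u ∈ S ∨ u + 1 ∈ S) := by
  have h10 := one_ne_zero' hn
  constructor
  · intro hu
    simp only [closedNbhd, Set.mem_iUnion, Set.mem_insert_iff,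
      SimpleGraph.mem_neighborSet] at hu
    obtain ⟨v, hv, hvu⟩ := hu
    rcases hvu with rfl | hadj
    · exact Or.inr (Or.inl hv)
    · rcases (adj_iff v u).1 hadj with ⟨-, h | h⟩
      · refine Or.inl ?_
        rw [show u - 1 = v by rw [h]; ring]
        exact hv
      · refine Or.inr (Or.inr ?_)
        rw [← h]
        exact hv
  · intro h
    simp only [closedNbhd, Set.mem_iUnion, Set.mem_insert_iff,
      SimpleGraph.mem_neighborSet]
    rcases h with h | h | h
    · refine ⟨u - 1, h, Or.inr ?_⟩
      rw [adj_iff]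
      exact ⟨fun he => h10 (by linear_combination -he), Or.inl (by ring)⟩
    · exact ⟨u, h, Or.inl rfl⟩
    · refine ⟨u + 1, h, Or.inr ?_⟩
      rw [adj_iff]
      exact ⟨fun he => h10 (by linear_combination he), Or.inr rfl⟩

lemma nbhd_subset_iff {n : ℕ} (hn : 3 ≤ n) (v : ZMod n) (X : Set (ZMod n)) :
    insert v ((cycleG n).neighborSet v) ⊆ X ↔ (v - 1 ∈ X ∧ v ∈ X ∧ v + 1 ∈ X) := by
  have h10 := one_ne_zero' hn
  constructor
  · intro h
    refine ⟨h ?_, h (Set.mem_insert _ _), h ?_⟩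
    · refine Set.mem_insert_of_mem _ ?_
      rw [SimpleGraph.mem_neighborSet, adj_iff]
      exact ⟨fun he => h10 (by linear_combination he), Or.inr (by ring)⟩
    · refine Set.mem_insert_of_mem _ ?_
      rw [SimpleGraph.mem_neighborSet, adj_iff]
      exact ⟨fun he => h10 (by linear_combination -he), Or.inl rfl⟩
  · rintro ⟨h1, h2, h3⟩ x hx
    rcases Set.mem_insert_iff.1 hx with rfl | hadj
    · exact h2
    · rcases (adj_iff v x).1 hadj with ⟨-, h | h⟩
      · rw [h]; exact h3
      · rw [show x = v - 1 by rw [h]; ring]; exact h1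

lemma digconvex_iff {n : ℕ} (hn : 3 ≤ n) (S : Set (ZMod n)) :
    DigConvex (cycleG n) S ↔ ∀ i : ZMod n,
      (¬(i ∈ S ∧ i+1 ∉ S ∧ i+2 ∈ S)) ∧ (¬(i ∈ S ∧ i+1 ∉ S ∧ i+2 ∉ S ∧ i+3 ∈ S)) := by
  have hA : ∀ v : ZMod n, (insert v ((cycleG n).neighborSet v) ⊆ closedNbhd (cycleG n) S)
      ↔ ((v-2 ∈ S ∨ v-1 ∈ S ∨ v ∈ S) ∧ (v-1 ∈ S ∨ v ∈ S ∨ v+1 ∈ S)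
          ∧ (v ∈ S ∨ v+1 ∈ S ∨ v+2 ∈ S)) := by
    intro v
    rw [nbhd_subset_iff hn, mem_closedNbhd hn, mem_closedNbhd hn, mem_closedNbhd hn,
      show v - 1 - 1 = v - 2 by ring, show v - 1 + 1 = v by ring,
      show v + 1 - 1 = v by ring, show v + 1 + 1 = v + 2 by ring]
  constructor
  · intro hD i
    constructor
    · rintro ⟨h1, h2, h3⟩
      refine h2 (hD (i+1) ((hA (i+1)).2 ?_))
      rw [show i+1-2 = i-1 by ring, show i+1-1 = i by ring, show i+1+1 = i+2 by ring,
        show i+1+2 = i+3 by ring]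
      exact ⟨Or.inr (Or.inl h1), Or.inl h1, Or.inr (Or.inl h3)⟩
    · rintro ⟨h1, h2, h3, h4⟩
      refine h2 (hD (i+1) ((hA (i+1)).2 ?_))
      rw [show i+1-2 = i-1 by ring, show i+1-1 = i by ring, show i+1+1 = i+2 by ring,
        show i+1+2 = i+3 by ring]
      exact ⟨Or.inr (Or.inl h1), Or.inl h1, Or.inr (Or.inr h4)⟩
  · intro hP v hv
    rw [hA] at hv
    obtain ⟨hA1, hA2, hA3⟩ := hv
    by_contra hvS
    by_cases hm : v - 1 ∈ S
    · have hp := hP (v-1)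
      rw [show v-1+1 = v by ring, show v-1+2 = v+1 by ring, show v-1+3 = v+2 by ring] at hp
      have hv1 : v + 1 ∉ S := fun hc => hp.1 ⟨hm, hvS, hc⟩
      have hv2 : v + 2 ∉ S := fun hc => hp.2 ⟨hm, hvS, hv1, hc⟩
      rcases hA3 with hc | hc | hc
      exacts [hvS hc, hv1 hc, hv2 hc]
    · have hp1 : v + 1 ∈ S := by
        rcases hA2 with hc | hc | hc
        exacts [absurd hc hm, absurd hc hvS, hc]
      have hm2 : v - 2 ∈ S := by
        rcases hA1 with hc | hc | hc
        exacts [hc, absurd hc hm, absurd hc hvS]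
      have hp := hP (v-2)
      rw [show v-2+1 = v-1 by ring, show v-2+2 = v by ring, show v-2+3 = v+1 by ring] at hp
      exact hp.2 ⟨hm2, hm, hvS, hp1⟩

end NDcycle


namespace NDcycle

def ValidB (n : ℕ) (f : ZMod n → Bool) : Prop :=
  ∀ i : ZMod n, ok (f i) (f (i+1)) (f (i+2)) (f (i+3)) = true

instance (n : ℕ) [NeZero n] : DecidablePred (ValidB n) := fun f => by
  unfold ValidB; infer_instance

lemma ok_iff : ∀ a b c d : Bool,
    ok a b c d = true ↔
      (¬(a = true ∧ ¬(b = true) ∧ c = true)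
        ∧ ¬(a = true ∧ ¬(b = true) ∧ ¬(c = true) ∧ d = true)) := by decide

open Classical in
noncomputable def setBoolEquiv (α : Type*) : Set α ≃ (α → Bool) where
  toFun S v := decide (v ∈ S)
  invFun f := {v | f v = true}
  left_inv S := by ext v; simp
  right_inv f := by funext v; simp

lemma nD_eq_validB {n : ℕ} (hn : 3 ≤ n) :
    nD (cycleG n) = Nat.card {f : ZMod n → Bool // ValidB n f} := by
  refine Nat.card_congr (Equiv.subtypeEquiv (setBoolEquiv (ZMod n)) fun S => ?_)
  rw [digconvex_iff hn]
  unfold ValidB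
  refine forall_congr' fun i => ?_
  rw [ok_iff]
  simp only [setBoolEquiv, Equiv.coe_fn_mk, decide_eq_true_eq]

lemma card_validB_eq_card_cyc (n : ℕ) :
    Nat.card {f : ZMod n → Bool // ValidB n f} = Nat.card {w : ZMod n → St // Cyc n w} := by
  refine Nat.card_congr
    ⟨fun f => ⟨fun i => (f.1 i, f.1 (i+1), f.1 (i+2)), fun i => ?_⟩,
     fun w => ⟨fun i => (w.1 i).1, fun i => ?_⟩,
     fun f => ?_, fun w => ?_⟩
  · refine ⟨rfl, congrArg f.1 (by ring), ?_⟩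
    show ok (f.1 i) (f.1 (i+1)) (f.1 (i+2)) (f.1 (i+1+2)) = true
    rw [show i+1+2 = i+3 by ring]
    exact f.2 i
  · have h1 : ∀ j : ZMod n, (w.1 (j+1)).1 = (w.1 j).2.1 := fun j => (w.2 j).1
    have h2 : ∀ j : ZMod n, (w.1 (j+1)).2.1 = (w.1 j).2.2 := fun j => (w.2 j).2.1
    have h3 := (w.2 i).2.2
    have e21 : (w.1 i).2.1 = (w.1 (i+1)).1 := (h1 i).symm
    have e22 : (w.1 i).2.2 = (w.1 (i+2)).1 := by
      rw [← h2 i, show i + 2 = i + 1 + 1 by ring, h1]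
    have e23 : (w.1 (i+1)).2.2 = (w.1 (i+3)).1 := by
      rw [← h2 (i+1), show i + 3 = i + 1 + 1 + 1 by ring, h1]
    rwa [e21, e22, e23] at h3
  · apply Subtype.ext; funext i; rfl
  · apply Subtype.ext; funext i
    have h1 : ∀ j : ZMod n, (w.1 (j+1)).1 = (w.1 j).2.1 := fun j => (w.2 j).1
    have h2 : ∀ j : ZMod n, (w.1 (j+1)).2.1 = (w.1 j).2.2 := fun j => (w.2 j).2.1
    show ((w.1 i).1, (w.1 (i+1)).1, (w.1 (i+2)).1) = w.1 i
    have e22 : (w.1 (i+2)).1 = (w.1 i).2.2 := by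
      rw [show i + 2 = i + 1 + 1 by ring, h1, h2]
    rw [h1 i, e22]

lemma nD_eq_T {n : ℕ} (hn : 3 ≤ n) : nD (cycleG n) = T n := by
  rw [nD_eq_validB hn, card_validB_eq_card_cyc, card_cyc n (by omega)]

end NDcycle

namespace NDcycle

set_option maxRecDepth 40000 in
lemma T_base : T 3 = 2 ∧ T 4 = 6 ∧ T 5 = 12 ∧ T 6 = 20 := by decide

end NDcycle

/-- `n_D(C_3) = 2`, `n_D(C_4) = 6`, `n_D(C_5) = 12`, `n_D(C_6) = 20`, and for
`n ≥ 7`, `n_D(C_n) = 2·n_D(C_{n-1}) - n_D(C_{n-2}) + n_D(C_{n-4})`. -/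
theorem nD_cycle_recurrence :
    nD (cycleG 3) = 2 ∧ nD (cycleG 4) = 6 ∧ nD (cycleG 5) = 12 ∧ nD (cycleG 6) = 20 ∧
      ∀ n : ℕ, 7 ≤ n →
        (nD (cycleG n) : ℤ) =
          2 * nD (cycleG (n - 1)) - nD (cycleG (n - 2)) + nD (cycleG (n - 4)) := by
  refine ⟨?_, ?_, ?_, ?_, ?_⟩
  · rw [NDcycle.nD_eq_T (by norm_num)]; exact NDcycle.T_base.1
  · rw [NDcycle.nD_eq_T (by norm_num)]; exact NDcycle.T_base.2.1
  · rw [NDcycle.nD_eq_T (by norm_num)]; exact NDcycle.T_base.2.2.1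
  · rw [NDcycle.nD_eq_T (by norm_num)]; exact NDcycle.T_base.2.2.2
  · intro n hn
    obtain ⟨k, rfl⟩ : ∃ k, n = k + 7 := ⟨n - 7, by omega⟩
    rw [show k+7-1 = k+6 by omega, show k+7-2 = k+5 by omega, show k+7-4 = k+3 by omega,
      NDcycle.nD_eq_T (show 3 ≤ k+7 by omega), NDcycle.nD_eq_T (show 3 ≤ k+6 by omega),
      NDcycle.nD_eq_T (show 3 ≤ k+5 by omega), NDcycle.nD_eq_T (show 3 ≤ k+3 by omega)]
    have h := NDcycle.T_rec (k+1)
    rw [show k+1+6 = k+7 by omega, show k+1+4 = k+5 by omega, show k+1+5 = k+6 by omega,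
      show k+1+2 = k+3 by omega] at h
    have h' : (NDcycle.T (k+7) : ℤ) + NDcycle.T (k+5)
        = 2 * NDcycle.T (k+6) + NDcycle.T (k+3) := by exact_mod_cast h
    linarith
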